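/- (SC-AdaNGD_k guarantee.) Let k ∈ ℝ, H > 0, let f : ℝ^d → ℝ be differentiable and H-strongly convex, and let x_1, …, x_T and x̄_T be the SC-AdaNGD_k iterates and output, with g_t := ∇f(x_t) ≠ 0 for all t = 1, …, T. Then f(x̄_T) − min_{x ∈ K} f(x) ≤ (1 / (2H Σ_{t=1}^T ‖g_t‖^{−k})) · Σ_{t=1}^T ‖g_t‖^{−2(k−1)} / (Σ_{τ=1}^t ‖g_τ‖^{−k}). -/

import Mathlib

open Finset in
private lemma tel_aux (ψ : ℕ → ℝ) (T : ℕ) :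
    ∑ t ∈ Finset.Icc 1 T, (ψ (t - 1) - ψ t) = ψ 0 - ψ T := by
  induction T with
  | zero => simp
  | succ n ih =>
      rw [Finset.sum_Icc_succ_top (Nat.le_add_left 1 n), ih]
      simp only [Nat.add_sub_cancel]
      ring

private lemma proj_contract {E : Type*} [NormedAddCommGroup E] [InnerProductSpace ℝ E]
    (K : Set E) (hKconv : Convex ℝ K)
    (proj : E → E) (hproj_mem : ∀ y, proj y ∈ K)
    (hproj_min : ∀ y, ∀ z ∈ K, ‖proj y - y‖ ≤ ‖z - y‖) :
    ∀ y, ∀ z ∈ K, ‖proj y - z‖ ≤ ‖y - z‖ := by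
  intro y z hz
  have hvar : (inner ℝ (y - proj y) (z - proj y) : ℝ) ≤ 0 := by
    have hinf : ‖y - proj y‖ = ⨅ w : K, ‖y - (w : E)‖ := by
      haveI : Nonempty K := ⟨⟨proj y, hproj_mem y⟩⟩
      refine le_antisymm (le_ciInf fun w => ?_) ?_
      · rw [norm_sub_rev, norm_sub_rev y]
        exact hproj_min y w w.2
      · refine ciInf_le ⟨0, ?_⟩ (⟨proj y, hproj_mem y⟩ : K)
        rintro r ⟨w, rfl⟩
        exact norm_nonneg _
    exact (norm_eq_iInf_iff_real_inner_le_zero hKconv (hproj_mem y)).1 hinf z hz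
  have hexp : ‖y - z‖ ^ 2 = ‖y - proj y‖ ^ 2 + 2 * (inner ℝ (y - proj y) (proj y - z) : ℝ)
      + ‖proj y - z‖ ^ 2 := by
    have h : y - z = (y - proj y) + (proj y - z) := by abel
    rw [h, norm_add_sq_real]
  have hin : (0:ℝ) ≤ (inner ℝ (y - proj y) (proj y - z) : ℝ) := by
    have : (inner ℝ (y - proj y) (proj y - z) : ℝ) = -(inner ℝ (y - proj y) (z - proj y) : ℝ) := by
      rw [← inner_neg_right, neg_sub]
    linarith [hvar, this.ge, this.le]
  nlinarith [norm_nonneg (y - proj y), norm_nonneg (proj y - z), norm_nonneg (y - z),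
    sq_nonneg (‖y - proj y‖)]

set_option maxHeartbeats 1600000 in
theorem sc_adangd_k_guarantee
    {d : ℕ} (T : ℕ) (hT : 1 ≤ T) (k H : ℝ) (hH : 0 < H)
    (K : Set (EuclideanSpace ℝ (Fin d)))
    (hKne : K.Nonempty) (hKcl : IsClosed K) (hKbdd : Bornology.IsBounded K)
    (hKconv : Convex ℝ K)
    (proj : EuclideanSpace ℝ (Fin d) → EuclideanSpace ℝ (Fin d))
    (hproj_mem : ∀ y, proj y ∈ K)
    (hproj_min : ∀ y, ∀ z ∈ K, ‖proj y - y‖ ≤ ‖z - y‖)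
    (f : EuclideanSpace ℝ (Fin d) → ℝ)
    (hdiff : Differentiable ℝ f)
    (hsc : ∀ x y, f x + (inner ℝ (gradient f x) (y - x) : ℝ) + (H / 2) * ‖x - y‖ ^ 2 ≤ f y)
    (x : ℕ → EuclideanSpace ℝ (Fin d)) (g : ℕ → EuclideanSpace ℝ (Fin d)) (η : ℕ → ℝ)
    (hx1 : x 1 ∈ K)
    (hg : ∀ t, g t = gradient f (x t))
    (hgne : ∀ t ∈ Finset.Icc 1 T, g t ≠ 0)
    (hη : ∀ t, η t = 1 / (H * ∑ τ ∈ Finset.Icc 1 t, ‖g τ‖ ^ (-k : ℝ)))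
    (hupd : ∀ t ∈ Finset.Icc 1 T, x (t + 1) = proj (x t - (η t * ‖g t‖ ^ (-k : ℝ)) • g t))
    (xbar : EuclideanSpace ℝ (Fin d))
    (hxbar : xbar = ∑ t ∈ Finset.Icc 1 T, ((‖g t‖ ^ (-k : ℝ)) / ∑ τ ∈ Finset.Icc 1 T, ‖g τ‖ ^ (-k : ℝ)) • x t)
    :
    ∀ xs ∈ K,
      f xbar - f xs ≤
        (1 / (2 * H * ∑ t ∈ Finset.Icc 1 T, ‖g t‖ ^ (-k : ℝ))) *
          ∑ t ∈ Finset.Icc 1 T,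
            ‖g t‖ ^ (-(2 * (k - 1)) : ℝ) / ∑ τ ∈ Finset.Icc 1 t, ‖g τ‖ ^ (-k : ℝ) := by
  intro xs hxs
  have hcontract : ∀ y, ∀ z ∈ K, ‖proj y - z‖ ≤ ‖y - z‖ :=
    proj_contract K hKconv proj hproj_mem hproj_min
  -- abbreviations
  set W : ℕ → ℝ := fun t => ‖g t‖ ^ (-k : ℝ) with hWdef
  have hWt : ∀ t, ‖g t‖ ^ (-k : ℝ) = W t := fun _ => rfl
  set Sm : ℕ → ℝ := fun t => ∑ τ ∈ Finset.Icc 1 t, W τ with hSdef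
  have hSt : ∀ t, (∑ τ ∈ Finset.Icc 1 t, ‖g τ‖ ^ (-k : ℝ)) = Sm t := fun _ => rfl
  simp only [hWt, hSt] at hη hupd hxbar ⊢
  have hwpos : ∀ t ∈ Finset.Icc 1 T, 0 < W t := fun t ht =>
    Real.rpow_pos_of_pos (norm_pos_iff.2 (hgne t ht)) _
  have hSpos : ∀ t ∈ Finset.Icc 1 T, 0 < Sm t := by
    intro t ht
    rw [Finset.mem_Icc] at ht
    refine Finset.sum_pos ?_ ⟨1, Finset.mem_Icc.2 ⟨le_refl 1, ht.1⟩⟩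
    intro τ hτ
    rw [Finset.mem_Icc] at hτ
    exact hwpos τ (Finset.mem_Icc.2 ⟨hτ.1, hτ.2.trans ht.2⟩)
  have hTmem : T ∈ Finset.Icc 1 T := Finset.mem_Icc.2 ⟨hT, le_refl T⟩
  have hSTpos : 0 < Sm T := hSpos T hTmem
  set u : ℕ → ℝ := fun t => ‖x t - xs‖ ^ 2 with hudef
  have hSd : ∀ t, 1 ≤ t → Sm t = Sm (t - 1) + W t := by
    intro t ht1
    obtain ⟨s, rfl⟩ : ∃ s, t = s + 1 := ⟨t - 1, (Nat.succ_pred_eq_of_pos ht1).symm⟩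
    show (∑ τ ∈ Finset.Icc 1 (s + 1), W τ) = (∑ τ ∈ Finset.Icc 1 (s + 1 - 1), W τ) + W (s + 1)
    rw [Nat.add_sub_cancel, Finset.sum_Icc_succ_top (Nat.le_add_left 1 s)]
  -- per-step inequality
  have step : ∀ t ∈ Finset.Icc 1 T,
      W t * (f (x t) - f xs) ≤
        (H / 2) * (Sm (t - 1) * u t - Sm t * u (t + 1))
          + W t ^ 2 * ‖g t‖ ^ 2 / (2 * H * Sm t) := by
    intro t ht
    have ht1 : 1 ≤ t := (Finset.mem_Icc.1 ht).1
    have hWp := hwpos t ht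
    have hSp := hSpos t ht
    set c : ℝ := η t * W t with hcdef
    set P : ℝ := inner ℝ (g t) (x t - xs) with hPdef
    have hc : c = W t / (H * Sm t) := by rw [hcdef, hη t]; ring
    have hcH : c * (H * Sm t) = W t := by
      rw [hc, div_mul_cancel₀]
      exact (mul_pos hH hSp).ne'
    -- strong convexity bound
    have hB : f (x t) - f xs ≤ P - (H / 2) * u t := by
      have h1 := hsc (x t) xs
      rw [← hg t] at h1
      have h2 : (inner ℝ (g t) (xs - x t) : ℝ) = -P := by
        rw [hPdef, ← inner_neg_right, neg_sub]
      rw [h2] at h1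
      simp only [hudef]
      linarith
    have hBw : W t * (f (x t) - f xs) ≤ W t * P - H / 2 * (W t * u t) :=
      calc W t * (f (x t) - f xs) ≤ W t * (P - (H / 2) * u t) :=
            mul_le_mul_of_nonneg_left hB hWp.le
        _ = W t * P - H / 2 * (W t * u t) := by ring
    -- projection step
    have hx' : x (t + 1) = proj (x t - c • g t) := hupd t ht
    have h1 : ‖x (t + 1) - xs‖ ≤ ‖(x t - xs) - c • g t‖ := by
      have e : x t - c • g t - xs = (x t - xs) - c • g t := by abel
      rw [hx', ← e]
      exact hcontract _ xs hxs
    have h2 : u (t + 1) ≤ ‖(x t - xs) - c • g t‖ ^ 2 := by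
      simp only [hudef]
      exact pow_le_pow_left₀ (norm_nonneg _) h1 2
    have h3 : ‖(x t - xs) - c • g t‖ ^ 2 = u t - 2 * (c * P) + c ^ 2 * ‖g t‖ ^ 2 := by
      rw [norm_sub_sq_real, real_inner_smul_right, real_inner_comm, norm_smul,
        Real.norm_eq_abs, mul_pow, sq_abs]
      try simp only [hudef, hPdef]
      try ring
    have hA : u (t + 1) ≤ u t - 2 * (c * P) + c ^ 2 * ‖g t‖ ^ 2 := h2.trans_eq h3
    have hA2 : H / 2 * (Sm t * u (t + 1)) ≤
        H / 2 * (Sm t * (u t - 2 * (c * P) + c ^ 2 * ‖g t‖ ^ 2)) := by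
      have := mul_le_mul_of_nonneg_left hA hSp.le
      have h0 : (0:ℝ) ≤ H / 2 := by positivity
      exact mul_le_mul_of_nonneg_left this h0
    have e1 : W t * P = H * (c * (Sm t * P)) := by rw [← hcH]; ring
    have e2 : W t ^ 2 * ‖g t‖ ^ 2 / (2 * H * Sm t) = H / 2 * (c ^ 2 * (Sm t * ‖g t‖ ^ 2)) := by
      rw [← hcH]
      field_simp
    have hD : Sm (t - 1) = Sm t - W t := by
      have := hSd t ht1; linarith
    rw [hD, e2]
    nlinarith [hBw, hA2, e1]
  -- sum the per-step inequality and telescope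
  have htel : ∑ t ∈ Finset.Icc 1 T, (Sm (t - 1) * u t - Sm t * u (t + 1))
      = Sm 0 * u 1 - Sm T * u (T + 1) := by
    have hcg : ∀ t ∈ Finset.Icc 1 T,
        Sm (t - 1) * u t - Sm t * u (t + 1)
          = (fun s => Sm s * u (s + 1)) (t - 1) - (fun s => Sm s * u (s + 1)) t := by
      intro t ht
      have ht1 : 1 ≤ t := (Finset.mem_Icc.1 ht).1
      have he : t - 1 + 1 = t := by omega
      simp only [he]
    rw [Finset.sum_congr rfl hcg]
    exact tel_aux (fun s => Sm s * u (s + 1)) T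
  have hSm0 : Sm 0 = 0 := by simp [hSdef]
  have hsum : ∑ t ∈ Finset.Icc 1 T, W t * (f (x t) - f xs)
      ≤ ∑ t ∈ Finset.Icc 1 T, W t ^ 2 * ‖g t‖ ^ 2 / (2 * H * Sm t) := by
    calc ∑ t ∈ Finset.Icc 1 T, W t * (f (x t) - f xs)
        ≤ ∑ t ∈ Finset.Icc 1 T,
            ((H / 2) * (Sm (t - 1) * u t - Sm t * u (t + 1))
              + W t ^ 2 * ‖g t‖ ^ 2 / (2 * H * Sm t)) := Finset.sum_le_sum step
      _ = (H / 2) * (Sm 0 * u 1 - Sm T * u (T + 1))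
            + ∑ t ∈ Finset.Icc 1 T, W t ^ 2 * ‖g t‖ ^ 2 / (2 * H * Sm t) := by
          rw [Finset.sum_add_distrib, ← Finset.mul_sum, htel]
      _ ≤ ∑ t ∈ Finset.Icc 1 T, W t ^ 2 * ‖g t‖ ^ 2 / (2 * H * Sm t) := by
          have hu : 0 ≤ u (T + 1) := pow_nonneg (norm_nonneg _) 2
          have h8 : 0 ≤ H * (Sm T * u (T + 1)) := mul_nonneg hH.le (mul_nonneg hSTpos.le hu)
          rw [hSm0]
          nlinarith [h8]
  -- Jensen step
  have hsum1 : ∑ t ∈ Finset.Icc 1 T, W t / Sm T = 1 := by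
    rw [← Finset.sum_div]
    exact div_self hSTpos.ne'
  have hjen : f xbar - f xs ≤ ∑ t ∈ Finset.Icc 1 T, (W t / Sm T) * (f (x t) - f xs) := by
    have hstep : ∀ t ∈ Finset.Icc 1 T,
        f xbar - f (x t) ≤ (inner ℝ (gradient f xbar) (xbar - x t) : ℝ) := by
      intro t ht
      have h1 := hsc xbar (x t)
      have h2 : (inner ℝ (gradient f xbar) (x t - xbar) : ℝ)
          = -(inner ℝ (gradient f xbar) (xbar - x t) : ℝ) := by
        rw [← inner_neg_right, neg_sub]
      rw [h2] at h1
      nlinarith [sq_nonneg ‖xbar - x t‖, hH]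
    have hzero : ∑ t ∈ Finset.Icc 1 T,
        (W t / Sm T) * (inner ℝ (gradient f xbar) (xbar - x t) : ℝ) = 0 := by
      have hv : ∑ t ∈ Finset.Icc 1 T, (W t / Sm T) • (xbar - x t) = 0 := by
        simp only [smul_sub]
        rw [Finset.sum_sub_distrib, ← Finset.sum_smul, hsum1, one_smul, ← hxbar, sub_self]
      calc ∑ t ∈ Finset.Icc 1 T, (W t / Sm T) * (inner ℝ (gradient f xbar) (xbar - x t) : ℝ)
          = (inner ℝ (gradient f xbar) (∑ t ∈ Finset.Icc 1 T, (W t / Sm T) • (xbar - x t)) : ℝ) := by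
            rw [inner_sum]
            exact Finset.sum_congr rfl fun t _ => (real_inner_smul_right _ _ _).symm
        _ = 0 := by rw [hv, inner_zero_right]
    have h4 : ∑ t ∈ Finset.Icc 1 T, (W t / Sm T) * (f xbar - f (x t)) ≤ 0 := by
      rw [← hzero]
      refine Finset.sum_le_sum fun t ht => ?_
      exact mul_le_mul_of_nonneg_left (hstep t ht) (div_nonneg (hwpos t ht).le hSTpos.le)
    have h5 : ∑ t ∈ Finset.Icc 1 T, (W t / Sm T) * (f xbar - f xs)
        = ∑ t ∈ Finset.Icc 1 T, (W t / Sm T) * (f xbar - f (x t))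
          + ∑ t ∈ Finset.Icc 1 T, (W t / Sm T) * (f (x t) - f xs) := by
      rw [← Finset.sum_add_distrib]
      exact Finset.sum_congr rfl fun t _ => by ring
    have h6 : ∑ t ∈ Finset.Icc 1 T, (W t / Sm T) * (f xbar - f xs) = f xbar - f xs := by
      rw [← Finset.sum_mul, hsum1, one_mul]
    linarith
  -- combine
  have hcomb : f xbar - f xs
      ≤ (1 / Sm T) * ∑ t ∈ Finset.Icc 1 T, W t ^ 2 * ‖g t‖ ^ 2 / (2 * H * Sm t) := by
    have e : ∑ t ∈ Finset.Icc 1 T, (W t / Sm T) * (f (x t) - f xs)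
        = (1 / Sm T) * ∑ t ∈ Finset.Icc 1 T, W t * (f (x t) - f xs) := by
      rw [Finset.mul_sum]
      exact Finset.sum_congr rfl fun t _ => by ring
    have h7 := mul_le_mul_of_nonneg_left hsum (one_div_nonneg.2 hSTpos.le)
    rw [e] at hjen
    linarith
  refine hcomb.trans (le_of_eq ?_)
  rw [Finset.mul_sum, Finset.mul_sum]
  refine Finset.sum_congr rfl fun t ht => ?_
  have hg0 : 0 < ‖g t‖ := norm_pos_iff.2 (hgne t ht)
  have hpw : W t ^ 2 * ‖g t‖ ^ 2 = ‖g t‖ ^ (-(2 * (k - 1)) : ℝ) := by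
    show (‖g t‖ ^ (-k : ℝ)) ^ 2 * ‖g t‖ ^ 2 = ‖g t‖ ^ (-(2 * (k - 1)) : ℝ)
    rw [← Real.rpow_natCast (‖g t‖ ^ (-k : ℝ)) 2, ← Real.rpow_natCast ‖g t‖ 2,
      ← Real.rpow_mul hg0.le, ← Real.rpow_add hg0]
    congr 1
    push_cast
    ring
  rw [hpw]
  have hSp : Sm t ≠ 0 := (hSpos t ht).ne'
  have hST : Sm T ≠ 0 := hSTpos.ne'
  have hHne : H ≠ 0 := hH.ne'
  field_simp
  try ring
  have hST' : (Finset.Icc 1 T).sum W = Sm T := rfl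
  have hSt' : (Finset.Icc 1 t).sum W = Sm t := rfl
  rw [hST', hSt']
  field_simp
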